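/- A direct limit (colimit over a directed index set) of a directed system of balanced groups is balanced. -/
import Mathlib


def IsBalanced (G : Type*) [Group G] : Prop :=
  ∀ g h : G, ¬ IsOfFinOrder h → ∀ k l : ℤ, k ≠ 0 → l ≠ 0 →
    g * h ^ k * g⁻¹ = h ^ l → |k| = |l|

/-- A direct limit (colimit over a directed index set) of balanced groups is balanced.
Here `L` together with the maps `ι i : G i →* L` is a direct limit of the directed system
`f i j : G i →* G j`: the maps are compatible, every element of `L` comes from some `G i`,
and any element killed in `L` is already killed at some finite stage (these conditions
characterize the direct limit of a directed system of groups). -/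
theorem directLimit_balanced {I : Type*} [Preorder I] [IsDirected I (· ≤ ·)]
    (G : I → Type*) [∀ i, Group (G i)] {L : Type*} [Group L]
    (f : ∀ i j, i ≤ j → G i →* G j)
    (ι : ∀ i, G i →* L)
    (hcompat : ∀ i j (hij : i ≤ j) (x : G i), ι j (f i j hij x) = ι i x)
    (hsurj : ∀ x : L, ∃ i, ∃ y : G i, ι i y = x)
    (hker : ∀ i (x : G i), ι i x = 1 → ∃ j, ∃ hij : i ≤ j, f i j hij x = 1)
    (hbal : ∀ i, IsBalanced (G i)) : IsBalanced L := by
  intro g h hh k l hk hl hrel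
  obtain ⟨i, g0, hg0⟩ := hsurj g
  obtain ⟨j, h0, hh0⟩ := hsurj h
  obtain ⟨m, him, hjm⟩ := directed_of (· ≤ ·) i j
  set g1 := f i m him g0 with hg1def
  set h1 := f j m hjm h0 with hh1def
  have hg1 : ι m g1 = g := by rw [hg1def, hcompat]; exact hg0
  have hh1 : ι m h1 = h := by rw [hh1def, hcompat]; exact hh0
  have hker1 : ι m (g1 * h1 ^ k * g1⁻¹ * (h1 ^ l)⁻¹) = 1 := by
    simp only [map_mul, map_inv, map_zpow, hg1, hh1, hrel, mul_inv_cancel]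
  obtain ⟨n, hmn, hn⟩ := hker m _ hker1
  set g2 := f m n hmn g1 with hg2def
  set h2 := f m n hmn h1 with hh2def
  have hrel2 : g2 * h2 ^ k * g2⁻¹ = h2 ^ l := by
    have := hn
    simp only [map_mul, map_inv, map_zpow, mul_inv_eq_one] at this
    exact this
  have hh2fin : ¬ IsOfFinOrder h2 := by
    intro hf
    apply hh
    have : ι n h2 = h := by rw [hh2def, hcompat]; exact hh1
    simpa [this] using (ι n).isOfFinOrder hf
  exact hbal n g2 h2 hh2fin k l hk hl hrel2
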